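/- Fix n, q ≥ 2, a partition ν = (ν_1,...,ν_ℓ) with ν_1 ≤ n, and k ≥ 1 with k + ℓ ≤ q - 1. For each choice of subsets 1 ≤ i^j_1 < ... < i^j_{ν_j} ≤ n (1 ≤ j ≤ ℓ), set c_i = #{(b,u) : i^b_u = i}. With ρ_i = n - i, the assignment λ̄_n = λ_n - 1, λ̄_{i-1} = λ_{i-1} + k - ((q-1)ρ_i + qλ_i - c_i) for 2 ≤ i ≤ n, defines a bijection between dominant λ ∈ ℤ^n satisfying (q-1)ρ_i + (q-1)λ_i - k - c_i ≥ 0 for all 1 ≤ i ≤ n and (q-1)ρ_i + qλ_i - c_i ≤ λ_{i-1} + k for 2 ≤ i ≤ n, and tuples (λ̄_1,...,λ̄_n) ∈ ℤ_+^n. Under this bijection, (q-1)Σρ_i + (q-1)Σλ_i - nk - |ν| = Σ_{i=1}^n (q^i - 1)λ̄_i - n + (q-k)(q^n-1)/(q-1) - Σ_{b,u} q^{i^b_u - 1}. -/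

import Mathlib

open Finset

/-- The multiplicity `c_i = #{(b,u) : i^b_u = i}` of Statement 12, where the index sets
`{i^j_1 < ⋯ < i^j_{ν_j}} ⊆ {1,…,n}` are encoded as subsets `I j ⊆ Fin n` (`0`-based). -/
noncomputable def stmt12c {n l : ℕ} (I : Fin l → Finset (Fin n)) (i : Fin n) : ℕ :=
  (Finset.univ.filter fun j : Fin l => i ∈ I j).card

/-- The map `λ ↦ λ̄` of Statement 12 (`0`-based indices):
`λ̄_n = λ_n - 1` and `λ̄_{i-1} = λ_{i-1} + k - ((q-1)ρ_i + qλ_i - c_i)` for `2 ≤ i ≤ n`,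
with `ρ_i = n - i`. -/
noncomputable def stmt12Map (n q k l : ℕ) (I : Fin l → Finset (Fin n)) (lam : Fin n → ℤ) :
    Fin n → ℤ :=
  fun i =>
    if h : (i : ℕ) = n - 1 then lam i - 1
    else
      lam i + k - (((q : ℤ) - 1) * ((n : ℤ) - 1 - ((i : ℕ) + 1))
          + q * lam ⟨(i : ℕ) + 1, by omega⟩
          - stmt12c I ⟨(i : ℕ) + 1, by omega⟩)

/-! ### Auxiliary lemmas -/

lemma s12_geom (q : ℤ) (m : ℕ) : (q - 1) * ∑ i ∈ Finset.range m, q ^ i = q ^ m - 1 := by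
  rw [mul_comm]; exact geom_sum_mul q m

lemma s12_const (q k : ℤ) :
    ∀ m : ℕ, ∑ i ∈ range m, (q ^ (i + 1) - 1) * (k - (q - 1) * ((m : ℤ) - 1 - i))
      = (q - 1) * (∑ i ∈ range (m + 1), ((m : ℤ) - i)) - (m + 1) * k + (m + 1)
        - (q - k) * (∑ i ∈ range (m + 1), q ^ i) + (q ^ (m + 1) - 1) := by
  intro m
  induction m with
  | zero => simp; ring
  | succ m ih =>
      push_cast
      have h1 : ∑ i ∈ range (m + 1), (q ^ (i + 1) - 1) * (k - (q - 1) * ((m : ℤ) + 1 - 1 - i))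
          = (∑ i ∈ range m, (q ^ (i + 1) - 1) * (k - (q - 1) * ((m : ℤ) - 1 - i)))
            - (q - 1) * (∑ i ∈ range m, (q ^ (i + 1) - 1)) + (q ^ (m + 1) - 1) * k := by
        rw [sum_range_succ]
        have : ∀ i ∈ range m,
            (q ^ (i + 1) - 1) * (k - (q - 1) * ((m : ℤ) + 1 - 1 - i))
              = (q ^ (i + 1) - 1) * (k - (q - 1) * ((m : ℤ) - 1 - i))
                - (q - 1) * (q ^ (i + 1) - 1) := by
          intro i _; ring
        rw [sum_congr rfl this, sum_sub_distrib, ← mul_sum]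
        push_cast; ring
      have h2 : (q - 1) * (∑ i ∈ range m, (q ^ (i + 1) - 1))
          = q * (q ^ m - 1) - (q - 1) * m := by
        have h : ∑ i ∈ range m, (q ^ (i + 1) - 1) = q * (∑ i ∈ range m, q ^ i) - m := by
          rw [sum_sub_distrib, mul_sum]
          simp [pow_succ, mul_comm]
        rw [h]
        linear_combination q * s12_geom q m
      have h3 : ∑ i ∈ range (m + 1 + 1), ((m : ℤ) + 1 - i)
          = (∑ i ∈ range (m + 1), ((m : ℤ) - i)) + (m + 1) := by
        rw [sum_range_succ]
        have : ∀ i ∈ range (m + 1), ((m : ℤ) + 1 - i) = ((m : ℤ) - i) + 1 := by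
          intro i _; ring
        rw [sum_congr rfl this, sum_add_distrib]
        simp
      rw [h1, ih, h2, h3, sum_range_succ (fun i => q ^ i) (m + 1)]
      ring

lemma s12_sum (q k : ℤ) (m : ℕ) (lam c lb : ℕ → ℤ)
    (hlast : lb m = lam m - 1)
    (hstep : ∀ i < m, lb i = lam i + k
      - ((q - 1) * ((m : ℤ) - 1 - i) + q * lam (i + 1) - c (i + 1))) :
    ∑ i ∈ range (m + 1), (q ^ (i + 1) - 1) * lb i
      = (q - 1) * (∑ i ∈ range (m + 1), ((m : ℤ) - i))
        + (q - 1) * (∑ i ∈ range (m + 1), lam i)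
        - (m + 1) * k - (∑ i ∈ range (m + 1), c i) + (m + 1)
        - (q - k) * (∑ i ∈ range (m + 1), q ^ i)
        + ∑ i ∈ range (m + 1), c i * q ^ i := by
  have key : ∀ i ∈ range m, (q ^ (i + 1) - 1) * lb i
      = ((q ^ (i + 1) - 1) * lam i - (q ^ (i + 1 + 1) - 1) * lam (i + 1))
        + (q - 1) * lam (i + 1)
        + (q ^ (i + 1) - 1) * (k - (q - 1) * ((m : ℤ) - 1 - i))
        + (q ^ (i + 1) - 1) * c (i + 1) := by
    intro i hi
    rw [hstep i (mem_range.mp hi)]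
    ring
  rw [sum_range_succ, hlast, sum_congr rfl key]
  rw [sum_add_distrib, sum_add_distrib, sum_add_distrib]
  have tele : ∑ i ∈ range m, ((q ^ (i + 1) - 1) * lam i - (q ^ (i + 1 + 1) - 1) * lam (i + 1))
      = (q ^ (0 + 1) - 1) * lam 0 - (q ^ (m + 1) - 1) * lam m :=
    Finset.sum_range_sub' (fun i => (q ^ (i + 1) - 1) * lam i) m
  have shiftlam : ∑ i ∈ range m, lam (i + 1) = (∑ i ∈ range (m + 1), lam i) - lam 0 := by
    rw [Finset.sum_range_succ' lam m]; ring
  have shiftc : ∑ i ∈ range m, (q ^ (i + 1) - 1) * c (i + 1)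
      = ∑ i ∈ range (m + 1), (q ^ i - 1) * c i := by
    rw [Finset.sum_range_succ' (fun i => (q ^ i - 1) * c i) m]
    simp
  have csplit : ∑ i ∈ range (m + 1), (q ^ i - 1) * c i
      = (∑ i ∈ range (m + 1), c i * q ^ i) - ∑ i ∈ range (m + 1), c i := by
    rw [← sum_sub_distrib]
    exact sum_congr rfl fun i _ => by ring
  rw [tele, ← mul_sum, shiftlam, shiftc, csplit, s12_const q k m]
  ring

/-- Lift of a function on `Fin n` to `ℕ`. -/
def s12lift (n : ℕ) (f : Fin n → ℤ) : ℕ → ℤ := fun j => if h : j < n then f ⟨j, h⟩ else 0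

lemma s12lift_lt (n : ℕ) (f : Fin n → ℤ) (j : ℕ) (h : j < n) : s12lift n f j = f ⟨j, h⟩ :=
  dif_pos h

/-- Auxiliary recursion for the inverse of `stmt12Map`. -/
noncomputable def stmt12InvAux (n : ℕ) (q k : ℤ) (c lb : ℕ → ℤ) : ℕ → ℤ
  | 0 => lb (n - 1) + 1
  | (m + 1) => lb (n - 1 - (m + 1)) - k
      + ((q - 1) * ((n : ℤ) - 1 - ((n - 1 - (m + 1) : ℕ) + 1 : ℕ))
        + q * stmt12InvAux n q k c lb m - c (n - 1 - m))

lemma stmt12InvAux_zero (n : ℕ) (q k : ℤ) (c lb : ℕ → ℤ) :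
    stmt12InvAux n q k c lb 0 = lb (n - 1) + 1 := rfl

lemma stmt12InvAux_succ (n : ℕ) (q k : ℤ) (c lb : ℕ → ℤ) (m : ℕ) :
    stmt12InvAux n q k c lb (m + 1) = lb (n - 1 - (m + 1)) - k
      + ((q - 1) * ((n : ℤ) - 1 - ((n - 1 - (m + 1) : ℕ) + 1 : ℕ))
        + q * stmt12InvAux n q k c lb m - c (n - 1 - m)) := rfl

lemma stmt12InvAux_mid (n : ℕ) (q k : ℤ) (c lb : ℕ → ℤ) (i : ℕ) (hi : i < n - 1) :
    stmt12InvAux n q k c lb (n - 1 - i)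
      = lb i - k + ((q - 1) * ((n : ℤ) - 1 - ((i + 1 : ℕ) : ℤ))
          + q * stmt12InvAux n q k c lb (n - 1 - (i + 1)) - c (i + 1)) := by
  have e1 : n - 1 - i = (n - 1 - (i + 1)) + 1 := by omega
  rw [e1, stmt12InvAux_succ]
  have e2 : n - 1 - (n - 1 - (i + 1) + 1) = i := by omega
  have e3 : n - 1 - (n - 1 - (i + 1)) = i + 1 := by omega
  rw [e2, e3]

set_option maxHeartbeats 1600000

/-- Fix `n, q ≥ 2`, a partition `ν = (ν_1 ≥ … ≥ ν_ℓ)` with positive parts,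
`ν_1 ≤ n`, and `k ≥ 1` with `k + ℓ ≤ q - 1`.  For each choice of subsets
`1 ≤ i^j_1 < ⋯ < i^j_{ν_j} ≤ n` (encoded as `I j ⊆ Fin n` with `|I j| = ν j`), and with
`c_i = #{(b,u) : i^b_u = i}`, the assignment above is a bijection between the dominant
`λ ∈ ℤ^n` satisfying `(q-1)ρ_i + (q-1)λ_i - k - c_i ≥ 0` for all `i` and
`(q-1)ρ_i + qλ_i - c_i ≤ λ_{i-1} + k` for `2 ≤ i ≤ n`, and `ℤ₊ⁿ`; and under this bijection
`(q-1)∑ρ_i + (q-1)∑λ_i - nk - |ν|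
  = ∑_{i=1}^n (q^i - 1)λ̄_i - n + (q-k)(q^n-1)/(q-1) - ∑_{b,u} q^{i^b_u - 1}`
(with `(q^n-1)/(q-1) = ∑_{i<n} q^i` and `∑_{b,u} q^{i^b_u-1} = ∑_j ∑_{i ∈ I j} q^i`). -/
theorem stmt12 (n q k l : ℕ) (hn : 2 ≤ n) (hq : 2 ≤ q)
    (nu : Fin l → ℕ) (hnu : Antitone nu) (hpos : ∀ j, 1 ≤ nu j) (hnu1 : ∀ j, nu j ≤ n)
    (hk : 1 ≤ k) (hkl : k + l ≤ q - 1)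
    (I : Fin l → Finset (Fin n)) (hI : ∀ j, (I j).card = nu j) :
    Set.BijOn (stmt12Map n q k l I)
      {lam : Fin n → ℤ | Antitone lam ∧
        (∀ i : Fin n,
          0 ≤ ((q : ℤ) - 1) * ((n : ℤ) - 1 - (i : ℕ)) + ((q : ℤ) - 1) * lam i - k
                - stmt12c I i) ∧
        (∀ i : Fin n, 0 < (i : ℕ) →
          ((q : ℤ) - 1) * ((n : ℤ) - 1 - (i : ℕ)) + q * lam i - stmt12c I i
            ≤ lam ⟨(i : ℕ) - 1, by omega⟩ + k)}
      {lb : Fin n → ℤ | ∀ i, 0 ≤ lb i}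
    ∧ ∀ lam : Fin n → ℤ,
        lam ∈ {lam : Fin n → ℤ | Antitone lam ∧
          (∀ i : Fin n,
            0 ≤ ((q : ℤ) - 1) * ((n : ℤ) - 1 - (i : ℕ)) + ((q : ℤ) - 1) * lam i - k
                  - stmt12c I i) ∧
          (∀ i : Fin n, 0 < (i : ℕ) →
            ((q : ℤ) - 1) * ((n : ℤ) - 1 - (i : ℕ)) + q * lam i - stmt12c I i
              ≤ lam ⟨(i : ℕ) - 1, by omega⟩ + k)} →
        ((q : ℤ) - 1) * (∑ i : Fin n, ((n : ℤ) - 1 - (i : ℕ)))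
            + ((q : ℤ) - 1) * (∑ i : Fin n, lam i) - n * k - (∑ j : Fin l, (nu j : ℤ))
          = (∑ i : Fin n, ((q : ℤ) ^ ((i : ℕ) + 1) - 1) * stmt12Map n q k l I lam i)
              - n + ((q : ℤ) - k) * (∑ i ∈ range n, (q : ℤ) ^ i)
              - ∑ j : Fin l, ∑ i ∈ I j, (q : ℤ) ^ (i : ℕ) := by
  classical
  have hq1 : (1:ℤ) ≤ (q:ℤ) - 1 := by omega
  have hql : (k:ℤ) + (l:ℤ) ≤ (q:ℤ) - 1 := by omega
  have hc0 : ∀ i : Fin n, (0:ℤ) ≤ (stmt12c I i : ℤ) := fun i => Int.natCast_nonneg _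
  have hcl : ∀ i : Fin n, (stmt12c I i : ℤ) ≤ (l:ℤ) := by
    intro i
    have h1 : stmt12c I i ≤ l := by
      have := Finset.card_filter_le (Finset.univ : Finset (Fin l)) (fun j => i ∈ I j)
      simpa [stmt12c] using this
    exact_mod_cast h1
  have lamext : ∀ (lam : Fin n → ℤ) (a b : Fin n), (a:ℕ) = (b:ℕ) → lam a = lam b :=
    fun lam a b h => by rw [Fin.ext h]
  have map_last : ∀ (lam : Fin n → ℤ) (i : Fin n), (i:ℕ) = n - 1 →
      stmt12Map n q k l I lam i = lam i - 1 := by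
    intro lam i h; simp [stmt12Map, h]
  have map_mid : ∀ (lam : Fin n → ℤ) (i i' : Fin n), (i:ℕ) < n - 1 → (i':ℕ) = (i:ℕ) + 1 →
      stmt12Map n q k l I lam i
        = lam i + k - (((q : ℤ) - 1) * ((n : ℤ) - 1 - ((i':ℕ) : ℤ))
            + q * lam i' - stmt12c I i') := by
    intro lam i i' h hv
    have hfi : (⟨(i:ℕ) + 1, by omega⟩ : Fin n) = i' := Fin.ext (by simp [hv])
    have hcast : (((i:ℕ) : ℤ) + 1) = ((i':ℕ) : ℤ) := by omega
    simp only [stmt12Map, dif_neg (by omega : ¬ (i:ℕ) = n - 1), hfi, hcast]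
  -- value of `lam` at the last index is at least 1, from condition 1 there
  have fwd : ∀ lam : Fin n → ℤ,
      (Antitone lam ∧
        (∀ i : Fin n,
          0 ≤ ((q : ℤ) - 1) * ((n : ℤ) - 1 - (i : ℕ)) + ((q : ℤ) - 1) * lam i - k
                - stmt12c I i) ∧
        (∀ i : Fin n, 0 < (i : ℕ) →
          ((q : ℤ) - 1) * ((n : ℤ) - 1 - (i : ℕ)) + q * lam i - stmt12c I i
            ≤ lam ⟨(i : ℕ) - 1, by omega⟩ + k)) →
      ∀ i : Fin n, 0 ≤ stmt12Map n q k l I lam i := by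
    rintro lam ⟨-, h1, h2⟩ i
    by_cases he : (i:ℕ) = n - 1
    · rw [map_last lam i he]
      have h1i := h1 i
      have hcast : ((i:ℕ) : ℤ) = (n:ℤ) - 1 := by omega
      rw [hcast] at h1i
      by_contra hcon
      push_neg at hcon
      have hle : lam i ≤ 0 := by linarith
      have : ((q:ℤ) - 1) * lam i ≤ 0 :=
        mul_nonpos_of_nonneg_of_nonpos (by linarith) hle
      have hci := hc0 i
      nlinarith [h1i]
    · have hlt : (i:ℕ) < n - 1 := by omega
      rw [map_mid lam i ⟨(i:ℕ) + 1, by omega⟩ hlt (by simp)]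
      have h2i := h2 ⟨(i:ℕ) + 1, by omega⟩ (by simp)
      simp only [Fin.val_mk] at h2i
      have : lam ⟨(i:ℕ) + 1 - 1, by omega⟩ = lam i := lamext lam _ _ (by simp)
      rw [this] at h2i
      simp only [Fin.val_mk]
      push_cast at h2i ⊢
      linarith
  have bwd : ∀ lam : Fin n → ℤ,
      (∀ i : Fin n, 0 ≤ stmt12Map n q k l I lam i) →
      (Antitone lam ∧
        (∀ i : Fin n,
          0 ≤ ((q : ℤ) - 1) * ((n : ℤ) - 1 - (i : ℕ)) + ((q : ℤ) - 1) * lam i - k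
                - stmt12c I i) ∧
        (∀ i : Fin n, 0 < (i : ℕ) →
          ((q : ℤ) - 1) * ((n : ℤ) - 1 - (i : ℕ)) + q * lam i - stmt12c I i
            ≤ lam ⟨(i : ℕ) - 1, by omega⟩ + k)) := by
    intro lam hlb
    have hlamlast : 1 ≤ lam ⟨n - 1, by omega⟩ := by
      have h := hlb ⟨n - 1, by omega⟩
      rw [map_last lam _ (by simp)] at h
      linarith
    -- condition 1 at the last index
    have hAlast : ∀ i : Fin n, (i:ℕ) = n - 1 →
        0 ≤ ((q : ℤ) - 1) * ((n : ℤ) - 1 - (i : ℕ)) + ((q : ℤ) - 1) * lam i - k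
            - stmt12c I i := by
      intro i he
      have hv : lam i = lam ⟨n - 1, by omega⟩ := lamext lam _ _ (by simp [he])
      have hcast : ((i:ℕ) : ℤ) = (n:ℤ) - 1 := by omega
      have hci := hcl i
      have hli : (1:ℤ) ≤ lam i := by rw [hv]; exact hlamlast
      have h0 : ((q:ℤ) - 1) * ((n:ℤ) - 1 - ((i:ℕ):ℤ)) = 0 := by rw [hcast]; ring
      nlinarith [mul_nonneg (by linarith : (0:ℤ) ≤ (q:ℤ) - 1)
        (by linarith : (0:ℤ) ≤ lam i - 1), h0]
    -- condition 1 everywhere, by downward induction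
    have hA : ∀ m : ℕ, ∀ i : Fin n, n - 1 - (i:ℕ) ≤ m →
        0 ≤ ((q : ℤ) - 1) * ((n : ℤ) - 1 - (i : ℕ)) + ((q : ℤ) - 1) * lam i - k
            - stmt12c I i := by
      intro m
      induction m with
      | zero =>
          intro i hi
          exact hAlast i (by omega)
      | succ m ih =>
          intro i hi
          by_cases he : (i:ℕ) = n - 1
          · exact hAlast i he
          · have hlt : (i:ℕ) < n - 1 := by omega
            have h2 := ih ⟨(i:ℕ) + 1, by omega⟩ (by simp; omega)
            have h3 := hlb i
            rw [map_mid lam i ⟨(i:ℕ) + 1, by omega⟩ hlt (by simp)] at h3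
            simp only [Fin.val_mk] at h2 h3
            have hci := hcl i
            have hci' := hc0 ⟨(i:ℕ) + 1, by omega⟩
            push_cast at h2 h3 ⊢
            nlinarith [mul_nonneg (by positivity : (0:ℤ) ≤ (q:ℤ)) h2,
              mul_nonneg (by linarith : (0:ℤ) ≤ (q:ℤ) - 1) h3]
    have hcond1 : ∀ i : Fin n,
        0 ≤ ((q : ℤ) - 1) * ((n : ℤ) - 1 - (i : ℕ)) + ((q : ℤ) - 1) * lam i - k
            - stmt12c I i := fun i => hA n i (by omega)
    -- adjacent monotonicity
    have hstepmono : ∀ i : Fin n, ∀ h : (i:ℕ) < n - 1, lam ⟨(i:ℕ) + 1, by omega⟩ ≤ lam i := by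
      intro i h
      have h3 := hlb i
      rw [map_mid lam i ⟨(i:ℕ) + 1, by omega⟩ h (by simp)] at h3
      have h2 := hcond1 ⟨(i:ℕ) + 1, by omega⟩
      simp only [Fin.val_mk] at h2 h3
      push_cast at h2 h3
      linarith
    have hanti : Antitone lam := by
      have step_all : ∀ d : ℕ, ∀ a : Fin n, ∀ hd : (a:ℕ) + d < n, lam ⟨(a:ℕ) + d, hd⟩ ≤ lam a := by
        intro d
        induction d with
        | zero => intro a hd; exact le_of_eq (lamext lam _ _ (by simp))
        | succ d ihd =>
            intro a hd
            have h1 : (a:ℕ) + d < n := by omega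
            have ha1 := ihd a h1
            have h2 : ((⟨(a:ℕ) + d, h1⟩ : Fin n) : ℕ) < n - 1 := by simp; omega
            have ha2 := hstepmono ⟨(a:ℕ) + d, h1⟩ h2
            have : lam ⟨(a:ℕ) + (d + 1), hd⟩
                = lam ⟨((⟨(a:ℕ) + d, h1⟩ : Fin n) : ℕ) + 1, by simp; omega⟩ :=
              lamext lam _ _ (by simp; omega)
            rw [this]
            exact le_trans ha2 ha1
      intro a b hab
      have hb : b = ⟨(a:ℕ) + ((b:ℕ) - (a:ℕ)), by omega⟩ := Fin.ext (by simp; omega)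
      rw [hb]
      exact step_all _ a _
    refine ⟨hanti, hcond1, ?_⟩
    intro i hi
    have h3 := hlb ⟨(i:ℕ) - 1, by omega⟩
    rw [map_mid lam ⟨(i:ℕ) - 1, by omega⟩ i (by simp; omega) (by simp; omega)] at h3
    linarith [h3]
  -- the inverse map
  set cN : ℕ → ℤ := fun j => if h : j < n then (stmt12c I ⟨j, h⟩ : ℤ) else 0 with hcNdef
  have cN_lt : ∀ (j : ℕ) (h : j < n), cN j = (stmt12c I ⟨j, h⟩ : ℤ) := fun j h => dif_pos h
  have hfg : ∀ (lb : Fin n → ℤ) (i : Fin n),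
      stmt12Map n q k l I
        (fun j => stmt12InvAux n (q:ℤ) (k:ℤ) cN (s12lift n lb) (n - 1 - (j:ℕ))) i = lb i := by
    intro lb i
    by_cases he : (i:ℕ) = n - 1
    · rw [map_last _ i he]
      show stmt12InvAux n (q:ℤ) (k:ℤ) cN (s12lift n lb) (n - 1 - (i:ℕ)) - 1 = lb i
      rw [show n - 1 - (i:ℕ) = 0 from by omega, stmt12InvAux_zero,
        s12lift_lt n lb (n - 1) (by omega)]
      have e := lamext lb ⟨n - 1, by omega⟩ i (by simp [he])
      rw [e]; ring
    · have hlt : (i:ℕ) < n - 1 := by omega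
      rw [map_mid _ i ⟨(i:ℕ) + 1, by omega⟩ hlt (by simp)]
      simp only [Fin.val_mk]
      rw [stmt12InvAux_mid n (q:ℤ) (k:ℤ) cN (s12lift n lb) (i:ℕ) hlt,
        s12lift_lt n lb (i:ℕ) (by omega), cN_lt ((i:ℕ) + 1) (by omega)]
      have e := lamext lb ⟨(i:ℕ), by omega⟩ i rfl
      rw [e]
      push_cast
      ring
  have hgf : ∀ (lam : Fin n → ℤ) (i : Fin n),
      stmt12InvAux n (q:ℤ) (k:ℤ) cN (s12lift n (stmt12Map n q k l I lam)) (n - 1 - (i:ℕ))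
        = lam i := by
    intro lam
    have key : ∀ m, m ≤ n - 1 →
        stmt12InvAux n (q:ℤ) (k:ℤ) cN (s12lift n (stmt12Map n q k l I lam)) m
          = lam ⟨n - 1 - m, by omega⟩ := by
      intro m
      induction m with
      | zero =>
          intro _
          rw [stmt12InvAux_zero, s12lift_lt n _ (n - 1) (by omega),
            map_last lam ⟨n - 1, by omega⟩ (by simp)]
          rw [sub_add_cancel]
          exact lamext lam _ _ (by simp)
      | succ m ih =>
          intro hm
          rw [stmt12InvAux_succ, s12lift_lt n _ (n - 1 - (m + 1)) (by omega),
            map_mid lam ⟨n - 1 - (m + 1), by omega⟩ ⟨n - 1 - (m + 1) + 1, by omega⟩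
              (by simp; omega) (by simp),
            ih (by omega), cN_lt (n - 1 - m) (by omega)]
          simp only [Fin.val_mk]
          have e1 : lam ⟨n - 1 - m, by omega⟩ = lam ⟨n - 1 - (m + 1) + 1, by omega⟩ :=
            lamext lam _ _ (by simp only [Fin.val_mk]; omega)
          have e1q : (q:ℤ) * lam ⟨n - 1 - m, by omega⟩
              = (q:ℤ) * lam ⟨n - 1 - (m + 1) + 1, by omega⟩ := by rw [e1]
          have e2 : (stmt12c I ⟨n - 1 - m, by omega⟩ : ℤ)
              = (stmt12c I ⟨n - 1 - (m + 1) + 1, by omega⟩ : ℤ) := by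
            congr 1
            exact congrArg _ (Fin.ext (by simp only [Fin.val_mk]; omega))
          linarith [e1q, e2]
    intro i
    rw [key (n - 1 - (i:ℕ)) (by omega)]
    exact lamext lam _ _ (by simp only [Fin.val_mk]; omega)
  constructor
  · refine ⟨fun lam hmem => fwd lam hmem, ?_, ?_⟩
    · intro a ha b hb hab
      funext i
      rw [← hgf a i, ← hgf b i, hab]
    · intro lb hlb
      refine ⟨fun j => stmt12InvAux n (q:ℤ) (k:ℤ) cN (s12lift n lb) (n - 1 - (j:ℕ)),
        bwd _ (fun i => by rw [hfg lb i]; exact hlb i), funext (hfg lb)⟩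
  -- the sum identity
  intro lam _
  have hlast : s12lift n (stmt12Map n q k l I lam) (n - 1) = s12lift n lam (n - 1) - 1 := by
    rw [s12lift_lt n _ (n - 1) (by omega : n - 1 < n),
      s12lift_lt n lam (n - 1) (by omega : n - 1 < n)]
    exact map_last lam ⟨n - 1, by omega⟩ (by simp)
  have hstep : ∀ i < n - 1, s12lift n (stmt12Map n q k l I lam) i
      = s12lift n lam i + (k:ℤ)
        - (((q:ℤ) - 1) * (((n - 1 : ℕ):ℤ) - 1 - i) + (q:ℤ) * s12lift n lam (i + 1)
            - cN (i + 1)) := by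
    intro i hi
    rw [s12lift_lt n _ i (by omega), s12lift_lt n lam i (by omega),
      s12lift_lt n lam (i + 1) (by omega), cN_lt (i + 1) (by omega)]
    rw [map_mid lam ⟨i, by omega⟩ ⟨i + 1, by omega⟩ (by simpa using hi) (by simp)]
    simp only [Fin.val_mk]
    have e : ((n - 1 : ℕ) : ℤ) = (n:ℤ) - 1 := by omega
    push_cast [e]
    ring
  have hmain := s12_sum (q:ℤ) (k:ℤ) (n - 1) (s12lift n lam) cN
      (s12lift n (stmt12Map n q k l I lam)) hlast hstep
  rw [show n - 1 + 1 = n from by omega] at hmain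
  have encast : ((n - 1 : ℕ) : ℤ) + 1 = (n:ℤ) := by omega
  have cv1 : ∑ i : Fin n, ((n:ℤ) - 1 - (i:ℕ)) = ∑ i ∈ range n, (((n - 1 : ℕ):ℤ) - i) := by
    rw [← Fin.sum_univ_eq_sum_range (fun j => (((n - 1 : ℕ):ℤ) - j)) n]
    refine sum_congr rfl fun i _ => ?_
    have e : ((n - 1 : ℕ) : ℤ) = (n:ℤ) - 1 := by omega
    rw [e]
  have cv2 : ∑ i : Fin n, lam i = ∑ i ∈ range n, s12lift n lam i := by
    rw [← Fin.sum_univ_eq_sum_range (fun j => s12lift n lam j) n]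
    refine sum_congr rfl fun i _ => ?_
    rw [s12lift_lt n lam (i:ℕ) i.isLt]
  have cv3 : ∑ i : Fin n, ((q:ℤ) ^ ((i:ℕ) + 1) - 1) * stmt12Map n q k l I lam i
      = ∑ i ∈ range n, ((q:ℤ) ^ (i + 1) - 1) * s12lift n (stmt12Map n q k l I lam) i := by
    rw [← Fin.sum_univ_eq_sum_range
      (fun j => ((q:ℤ) ^ (j + 1) - 1) * s12lift n (stmt12Map n q k l I lam) j) n]
    refine sum_congr rfl fun i _ => ?_
    rw [s12lift_lt n _ (i:ℕ) i.isLt]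
  have hcite : ∀ i : Fin n, (stmt12c I i : ℤ) = ∑ j : Fin l, if i ∈ I j then (1:ℤ) else 0 := by
    intro i
    rw [show (stmt12c I i : ℤ)
        = ((∑ j : Fin l, if i ∈ I j then 1 else 0 : ℕ) : ℤ) from by
      rw [stmt12c, Finset.card_filter]]
    push_cast
    rfl
  have cv4 : ∑ j : Fin l, (nu j : ℤ) = ∑ i ∈ range n, cN i := by
    rw [← Fin.sum_univ_eq_sum_range (fun j => cN j) n]
    have e1 : ∑ i : Fin n, cN (i:ℕ) = ∑ i : Fin n, (stmt12c I i : ℤ) := by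
      refine sum_congr rfl fun i _ => ?_
      rw [cN_lt (i:ℕ) i.isLt]
    rw [e1, sum_congr rfl fun i _ => hcite i, Finset.sum_comm]
    refine (sum_congr rfl fun j _ => ?_).symm
    rw [Finset.sum_ite_mem, Finset.univ_inter, Finset.sum_const, hI j]
    simp
  have cv5 : ∑ j : Fin l, ∑ i ∈ I j, (q:ℤ) ^ (i:ℕ) = ∑ i ∈ range n, cN i * (q:ℤ) ^ i := by
    rw [← Fin.sum_univ_eq_sum_range (fun j => cN j * (q:ℤ) ^ j) n]
    have e1 : ∑ i : Fin n, cN (i:ℕ) * (q:ℤ) ^ (i:ℕ)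
        = ∑ i : Fin n, (stmt12c I i : ℤ) * (q:ℤ) ^ (i:ℕ) := by
      refine sum_congr rfl fun i _ => ?_
      rw [cN_lt (i:ℕ) i.isLt]
    have e2 : ∀ i : Fin n, (stmt12c I i : ℤ) * (q:ℤ) ^ (i:ℕ)
        = ∑ j : Fin l, if i ∈ I j then (q:ℤ) ^ (i:ℕ) else 0 := by
      intro i
      rw [hcite i, Finset.sum_mul]
      refine sum_congr rfl fun j _ => ?_
      split <;> simp
    rw [e1, sum_congr rfl fun i _ => e2 i, Finset.sum_comm]
    refine (sum_congr rfl fun j _ => ?_).symm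
    rw [Finset.sum_ite_mem, Finset.univ_inter]
  rw [cv1, cv2, cv3, cv4, cv5]
  have hk2 : (((n - 1 : ℕ):ℤ) + 1) * (k:ℤ) = (n:ℤ) * (k:ℤ) := by rw [encast]
  linarith [hmain, hk2, encast]
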